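/- Let H₁ and H₂ be two isomorphic k-uniform hypergraphs on the same vertex set V of size m (with 1 ≤ k ≤ m), both non-empty and non-complete. Then the number of permutations π of V with π(H₂) = H₁, i.e., {π(e) : e ∈ E₂} = E₁, is at most m! / (m - k + 1). -/

import Mathlib

open Finset

lemma fact_mul_fact_le_aux {a b : ℕ} (ha : 1 ≤ a) (hb : 1 ≤ b) :
    a.factorial * b.factorial ≤ (a + b - 1).factorial := by
  obtain ⟨c, rfl⟩ : ∃ c, b = c + 1 := ⟨b - 1, by omega⟩
  have h1 : (a + c).choose c * c.factorial * a.factorial = (a + c).factorial := by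
    have h := Nat.choose_mul_factorial_mul_factorial (n := a + c) (k := c) (by omega)
    have h2 : a + c - c = a := by omega
    rwa [h2] at h
  have h2 : c + 1 ≤ (a + c).choose c := by
    calc c + 1 = (c + 1).choose c := (Nat.choose_succ_self_right c).symm
      _ ≤ (a + c).choose c := Nat.choose_le_choose c (by omega)
  calc a.factorial * (c + 1).factorial = (c + 1) * c.factorial * a.factorial := by
        first
        | (rw [Nat.factorial_succ]; ring)
        | rw [Nat.factorial_succ]
    _ ≤ (a + c).choose c * c.factorial * a.factorial :=
        Nat.mul_le_mul_right _ (Nat.mul_le_mul_right _ h2)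
    _ = (a + c).factorial := h1
    _ = (a + (c + 1) - 1).factorial := by
        have h3 : a + (c + 1) - 1 = a + c := by omega
        rw [h3]

lemma adj_pair_aux {V : Type*} [DecidableEq V] (k : ℕ) (E : Finset (Finset V))
    (hu : ∀ e ∈ E, e.card = k) :
    ∀ n : ℕ, ∀ e s : Finset V, e ∈ E → s.card = k → s ∉ E → (e \ s).card = n →
    ∃ e' ∈ E, ∃ s' : Finset V, s'.card = k ∧ s' ∉ E ∧ (e' \ s').card = 1 := by
  intro n
  induction n using Nat.strong_induction_on with
  | _ n IH =>
    intro e s he hs hsE hn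
    have hek : e.card = k := hu e he
    have hes : e ≠ s := fun h => hsE (h ▸ he)
    have hn1 : 1 ≤ n := by
      rcases Nat.eq_zero_or_pos n with h0 | h; swap
      · exact h
      exfalso
      have hemp : e \ s = ∅ := Finset.card_eq_zero.mp (by omega)
      have hsub : e ⊆ s := by rwa [Finset.sdiff_eq_empty_iff_subset] at hemp
      exact hes (Finset.eq_of_subset_of_card_le hsub (by omega))
    rcases eq_or_lt_of_le hn1 with h1 | h2
    · exact ⟨e, he, s, hs, hsE, by omega⟩
    have hxe : (e \ s).Nonempty := by rw [← Finset.card_pos, hn]; omega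
    obtain ⟨x, hx⟩ := hxe
    have hse : (s \ e).Nonempty := by
      rw [← Finset.card_pos, Finset.card_sdiff_comm (by omega), hn]; omega
    obtain ⟨y, hy⟩ := hse
    obtain ⟨hxe', hxs⟩ := Finset.mem_sdiff.mp hx
    obtain ⟨hys, hye⟩ := Finset.mem_sdiff.mp hy
    have hk1 : 1 ≤ k := by
      have := Finset.card_pos.mpr ⟨x, hxe'⟩; omega
    have hyne : y ∉ e.erase x := fun h => hye (Finset.mem_of_mem_erase h)
    have hxy : x ≠ y := fun h => hxs (h ▸ hys)
    set e' := insert y (e.erase x) with he'def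
    have he'card : e'.card = k := by
      rw [he'def, Finset.card_insert_of_notMem hyne, Finset.card_erase_of_mem hxe']
      omega
    by_cases he'E : e' ∈ E
    · have hsd : e' \ s = (e \ s).erase x := by
        ext z
        simp only [he'def, Finset.mem_sdiff, Finset.mem_erase, Finset.mem_insert]
        constructor
        · rintro ⟨(rfl | ⟨hzx, hze⟩), hzs⟩
          · exact absurd hys hzs
          · exact ⟨hzx, hze, hzs⟩
        · rintro ⟨hzx, hze, hzs⟩
          exact ⟨Or.inr ⟨hzx, hze⟩, hzs⟩
      have hcard' : (e' \ s).card = n - 1 := by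
        rw [hsd, Finset.card_erase_of_mem hx, hn]
      exact IH (n - 1) (by omega) e' s he'E hs hsE hcard'
    · have hsd : e \ e' = {x} := by
        ext z
        simp only [he'def, Finset.mem_sdiff, Finset.mem_insert, Finset.mem_erase,
          Finset.mem_singleton]
        constructor
        · rintro ⟨hze, hz2⟩
          push_neg at hz2
          by_contra hzx
          exact (hz2.2 hzx) hze
        · rintro rfl
          refine ⟨hxe', ?_⟩
          push_neg
          exact ⟨hxy, fun h => absurd rfl h⟩
      exact IH 1 (by omega) e e' he he'card he'E (by rw [hsd]; simp)

theorem isomorphism_count_bound {V : Type*} [Fintype V] [DecidableEq V] (m k : ℕ)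
    (hV : Fintype.card V = m) (hk1 : 1 ≤ k) (hkm : k ≤ m)
    (E₁ E₂ : Finset (Finset V))
    (huniform₁ : ∀ e ∈ E₁, e.card = k) (huniform₂ : ∀ e ∈ E₂, e.card = k)
    (hnonempty₁ : E₁.Nonempty) (hnonempty₂ : E₂.Nonempty)
    (hnoncomplete₁ : ∃ s : Finset V, s.card = k ∧ s ∉ E₁)
    (hnoncomplete₂ : ∃ s : Finset V, s.card = k ∧ s ∉ E₂)
    (hiso : ∃ σ : Equiv.Perm V, E₂.image (fun e => e.image (⇑σ)) = E₁) :
    (Nat.card {π : Equiv.Perm V // E₂.image (fun e => e.image (⇑π)) = E₁} : ℝ) ≤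
      (Nat.factorial m : ℝ) / ((m : ℝ) - (k : ℝ) + 1) := by
  classical
  -- find an adjacent edge / non-edge pair for E₂
  obtain ⟨s₂, hs₂k, hs₂⟩ := hnoncomplete₂
  obtain ⟨e₂, he₂⟩ := hnonempty₂
  obtain ⟨e, he, s, hsk, hsE, hes1⟩ :=
    adj_pair_aux k E₂ huniform₂ ((e₂ \ s₂).card) e₂ s₂ he₂ hs₂k hs₂ rfl
  have hek : e.card = k := huniform₂ e he
  set t : Finset V := e ∩ s with htdef
  have htcard : t.card = k - 1 := by
    have h := Finset.card_inter_add_card_sdiff e s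
    rw [htdef]
    omega
  obtain ⟨x₀, hx₀⟩ : ∃ x₀, e \ s = {x₀} := Finset.card_eq_one.mp hes1
  have hse1 : (s \ e).card = 1 := by
    rw [Finset.card_sdiff_comm (by omega)]; exact hes1
  obtain ⟨y₀, hy₀⟩ : ∃ y₀, s \ e = {y₀} := Finset.card_eq_one.mp hse1
  have hx₀s : x₀ ∉ s := (Finset.mem_sdiff.mp (hx₀ ▸ Finset.mem_singleton_self x₀)).2
  have hx₀e : x₀ ∈ e := (Finset.mem_sdiff.mp (hx₀ ▸ Finset.mem_singleton_self x₀)).1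
  have hy₀e : y₀ ∉ e := (Finset.mem_sdiff.mp (hy₀ ▸ Finset.mem_singleton_self y₀)).2
  have hy₀s : y₀ ∈ s := (Finset.mem_sdiff.mp (hy₀ ▸ Finset.mem_singleton_self y₀)).1
  have hx₀t : x₀ ∉ t := fun h => hx₀s (Finset.mem_inter.mp h).2
  have hy₀t : y₀ ∉ t := fun h => hy₀e (Finset.mem_inter.mp h).1
  have hins_x₀ : insert x₀ t = e := by
    rw [Finset.insert_eq, Finset.union_comm, ← hx₀, htdef]
    exact sup_inf_sdiff e s
  have hins_y₀ : insert y₀ t = s := by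
    rw [Finset.insert_eq, Finset.union_comm, ← hy₀, htdef, Finset.inter_comm]
    exact sup_inf_sdiff s e
  set A : Finset V := univ.filter (fun x => x ∉ t ∧ insert x t ∈ E₂) with hAdef
  set B : Finset V := univ.filter (fun x => x ∉ t ∧ insert x t ∉ E₂) with hBdef
  have hx₀A : x₀ ∈ A := by
    rw [hAdef, Finset.mem_filter]
    exact ⟨Finset.mem_univ _, hx₀t, hins_x₀ ▸ he⟩
  have hy₀B : y₀ ∈ B := by
    rw [hBdef, Finset.mem_filter]
    exact ⟨Finset.mem_univ _, hy₀t, hins_y₀ ▸ hsE⟩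
  have hdisj : Disjoint A B := by
    rw [Finset.disjoint_left]
    intro z hzA hzB
    rw [hAdef, Finset.mem_filter] at hzA
    rw [hBdef, Finset.mem_filter] at hzB
    exact hzB.2.2 hzA.2.2
  have hunion : A ∪ B = tᶜ := by
    ext z
    simp only [hAdef, hBdef, Finset.mem_union, Finset.mem_filter, Finset.mem_univ, true_and,
      Finset.mem_compl]
    tauto
  have hab : A.card + B.card = m - k + 1 := by
    have h1 : (A ∪ B).card = A.card + B.card := Finset.card_union_of_disjoint hdisj
    have h2 : (tᶜ : Finset V).card = m - t.card := by rw [Finset.card_compl, hV]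
    rw [hunion, h2, htcard] at h1
    omega
  have ha1 : 1 ≤ A.card := Finset.card_pos.mpr ⟨x₀, hx₀A⟩
  have hb1 : 1 ≤ B.card := Finset.card_pos.mpr ⟨y₀, hy₀B⟩
  -- the set of isomorphisms
  set S : Finset (Equiv.Perm V) :=
    univ.filter (fun π => E₂.image (fun e => e.image (⇑π)) = E₁) with hSdef
  have hcardS : Nat.card {π : Equiv.Perm V // E₂.image (fun e => e.image (⇑π)) = E₁} = S.card := by
    rw [Nat.card_eq_fintype_card, hSdef, Fintype.card_subtype]
  -- the stabilizer-type set
  set T : Finset (Equiv.Perm V) :=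
    univ.filter (fun τ => (∀ x ∈ t, τ x = x) ∧ E₂.image (fun e => e.image (⇑τ)) = E₂)
    with hTdef
  -- T injects into Perm A × Perm B
  have hTle : T.card ≤ A.card.factorial * B.card.factorial := by
    have key : ∀ τ : Equiv.Perm V, τ ∈ T →
        ((∀ x : V, x ∈ A ↔ τ x ∈ A) ∧ (∀ x : V, x ∈ B ↔ τ x ∈ B)) := by
      intro τ hτ
      rw [hTdef, Finset.mem_filter] at hτ
      obtain ⟨-, hfix, hpres⟩ := hτ
      have hnt : ∀ x : V, x ∉ t → τ x ∉ t := by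
        intro x hxt hτxt
        have h1 : τ (τ x) = τ x := hfix _ hτxt
        have h2 : τ x = x := τ.injective h1
        exact hxt (h2 ▸ hτxt)
      have htimg : t.image (⇑τ) = t := by
        rw [Finset.image_congr (fun x hx => hfix x hx)]
        exact Finset.image_id
      have hins : ∀ x : V, (insert x t).image (⇑τ) = insert (τ x) t := by
        intro x
        rw [Finset.image_insert, htimg]
      have hmem : ∀ x : V, x ∉ t → (insert x t ∈ E₂ ↔ insert (τ x) t ∈ E₂) := by
        intro x hxt
        constructor
        · intro h
          have : (insert x t).image (⇑τ) ∈ E₂.image (fun e => e.image (⇑τ)) :=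
            Finset.mem_image_of_mem _ h
          rwa [hpres, hins] at this
        · intro h
          rw [← hpres] at h
          obtain ⟨e', he'E, he'⟩ := Finset.mem_image.mp h
          have : e' = insert x t := by
            apply Finset.image_injective τ.injective
            rw [he', hins]
          exact this ▸ he'E
      constructor
      · intro x
        constructor
        · intro hxA
          rw [hAdef, Finset.mem_filter] at hxA ⊢
          exact ⟨Finset.mem_univ _, hnt x hxA.2.1, (hmem x hxA.2.1).mp hxA.2.2⟩
        · intro hτA
          rw [hAdef, Finset.mem_filter] at hτA ⊢
          have hxt : x ∉ t := by
            intro hxt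
            exact hτA.2.1 (by rw [hfix x hxt]; exact hxt)
          exact ⟨Finset.mem_univ _, hxt, (hmem x hxt).mpr hτA.2.2⟩
      · intro x
        constructor
        · intro hxB
          rw [hBdef, Finset.mem_filter] at hxB ⊢
          exact ⟨Finset.mem_univ _, hnt x hxB.2.1, fun h => hxB.2.2 ((hmem x hxB.2.1).mpr h)⟩
        · intro hτB
          rw [hBdef, Finset.mem_filter] at hτB ⊢
          have hxt : x ∉ t := by
            intro hxt
            exact hτB.2.1 (by rw [hfix x hxt]; exact hxt)
          exact ⟨Finset.mem_univ _, hxt, fun h => hτB.2.2 ((hmem x hxt).mp h)⟩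
    have hinj : Fintype.card ↥T ≤
        Fintype.card (Equiv.Perm {x // x ∈ A} × Equiv.Perm {x // x ∈ B}) := by
      apply Fintype.card_le_of_injective
        (fun τp => (τp.1.subtypePerm (fun x => ((key τp.1 τp.2).1 x).symm), τp.1.subtypePerm (fun x => ((key τp.1 τp.2).2 x).symm)))
      rintro ⟨τ₁, h₁⟩ ⟨τ₂, h₂⟩ hEq
      have hEqA := congrArg Prod.fst hEq
      have hEqB := congrArg Prod.snd hEq
      simp only at hEqA hEqB
      apply Subtype.ext
      apply Equiv.ext
      intro x
      by_cases hxt : x ∈ t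
      · have hf₁ := ((Finset.mem_filter.mp h₁).2).1 x hxt
        have hf₂ := ((Finset.mem_filter.mp h₂).2).1 x hxt
        rw [hf₁, hf₂]
      · have hxAB : x ∈ A ∪ B := by rw [hunion]; exact Finset.mem_compl.mpr hxt
        rcases Finset.mem_union.mp hxAB with hxA | hxB
        · have h3 : τ₁.subtypePerm (fun x => ((key τ₁ h₁).1 x).symm) ⟨x, hxA⟩ = τ₂.subtypePerm (fun x => ((key τ₂ h₂).1 x).symm) ⟨x, hxA⟩ := by
            rw [hEqA]
          exact congrArg Subtype.val h3
        · have h3 : τ₁.subtypePerm (fun x => ((key τ₁ h₁).2 x).symm) ⟨x, hxB⟩ = τ₂.subtypePerm (fun x => ((key τ₂ h₂).2 x).symm) ⟨x, hxB⟩ := by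
            rw [hEqB]
          exact congrArg Subtype.val h3
    rw [← Fintype.card_coe T]
    calc Fintype.card ↥T ≤ _ := hinj
      _ = A.card.factorial * B.card.factorial := by
        rw [Fintype.card_prod, Fintype.card_perm, Fintype.card_perm, Fintype.card_coe,
          Fintype.card_coe]
  -- restriction map to embeddings of t
  set f : Equiv.Perm V → ({x // x ∈ t} ↪ V) :=
    (fun π => (Function.Embedding.subtype _).trans π.toEmbedding) with hfdef
  have hfiber : ∀ b' ∈ S.image f,
      (S.filter (fun σ => f σ = b')).card ≤ A.card.factorial * B.card.factorial := by
    intro b' hb'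
    obtain ⟨σ₀, hσ₀S, hσ₀f⟩ := Finset.mem_image.mp hb'
    have hσ₀E : E₂.image (fun e => e.image (⇑σ₀)) = E₁ := (Finset.mem_filter.mp hσ₀S).2
    refine le_trans (Finset.card_le_card_of_injOn (fun σ => σ₀⁻¹ * σ) ?_ ?_) hTle
    · intro σ hσ
      obtain ⟨hσS, hσf⟩ := Finset.mem_filter.mp hσ
      have hσE : E₂.image (fun e => e.image (⇑σ)) = E₁ := (Finset.mem_filter.mp hσS).2
      rw [hTdef, Finset.mem_coe, Finset.mem_filter]
      refine ⟨Finset.mem_univ _, ?_, ?_⟩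
      · intro x hxt
        have hfx : σ x = σ₀ x := by
          have := congrFun (congrArg (fun (g : {x // x ∈ t} ↪ V) => (g : {x // x ∈ t} → V))
            (hσf.trans hσ₀f.symm)) ⟨x, hxt⟩
          simpa [hfdef] using this
        simp [Equiv.Perm.mul_apply, hfx]
      · have hcomp : E₂.image (fun e => e.image (⇑(σ₀⁻¹ * σ))) =
            (E₂.image (fun e => e.image (⇑σ))).image (fun e => e.image (⇑σ₀⁻¹)) := by
          rw [Finset.image_image]
          apply Finset.image_congr
          intro e' _
          simp only [Function.comp_apply, Finset.image_image]
          rfl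
        rw [hcomp, hσE, ← hσ₀E, Finset.image_image]
        have : ((fun e => Finset.image (⇑σ₀⁻¹) e) ∘ fun e => Finset.image (⇑σ₀) e) = id := by
          funext e'
          have hc : ⇑σ₀⁻¹ ∘ ⇑σ₀ = id := by funext z; simp
          simp [Finset.image_image, hc]
        rw [this, Finset.image_id]
    · intro σ₁ _ σ₂ _ hEq
      exact mul_left_cancel hEq
  have hScard : S.card ≤ (A.card.factorial * B.card.factorial) * (S.image f).card :=
    Finset.card_le_mul_card_image S _ hfiber
  have himg : (S.image f).card ≤ m.descFactorial (k - 1) := by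
    calc (S.image f).card ≤ Fintype.card ({x // x ∈ t} ↪ V) := Finset.card_le_univ _
      _ = m.descFactorial (k - 1) := by
        rw [Fintype.card_embedding_eq, hV, Fintype.card_coe, htcard]
  have hfactle : A.card.factorial * B.card.factorial ≤ (m - k).factorial := by
    have := fact_mul_fact_le_aux ha1 hb1
    have h2 : A.card + B.card - 1 = m - k := by omega
    rwa [h2] at this
  have hSfinal : S.card ≤ (m - k).factorial * m.descFactorial (k - 1) :=
    le_trans hScard (Nat.mul_le_mul hfactle himg)
  -- arithmetic conclusion
  have hNm : ((m - k).factorial * m.descFactorial (k - 1)) * (m - k + 1) = m.factorial := by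
    have h1 := Nat.factorial_mul_descFactorial (n := m) (k := k - 1) (by omega)
    have h2 : m - (k - 1) = (m - k) + 1 := by omega
    rw [h2, Nat.factorial_succ] at h1
    calc ((m - k).factorial * m.descFactorial (k - 1)) * (m - k + 1)
        = ((m - k) + 1) * (m - k).factorial * m.descFactorial (k - 1) := by ring
      _ = m.factorial := h1
  rw [hcardS]
  have hden : (m : ℝ) - (k : ℝ) + 1 = ((m - k + 1 : ℕ) : ℝ) := by
    push_cast [Nat.cast_sub hkm]
    ring
  have hdenpos : (0 : ℝ) < (m : ℝ) - (k : ℝ) + 1 := by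
    rw [hden]
    positivity
  rw [le_div_iff₀ hdenpos, hden]
  calc (S.card : ℝ) * ((m - k + 1 : ℕ) : ℝ)
      ≤ (((m - k).factorial * m.descFactorial (k - 1) : ℕ) : ℝ) * ((m - k + 1 : ℕ) : ℝ) := by
        apply mul_le_mul_of_nonneg_right _ (by positivity)
        exact_mod_cast hSfinal
    _ = ((((m - k).factorial * m.descFactorial (k - 1)) * (m - k + 1) : ℕ) : ℝ) := by
        push_cast; ring
    _ = (m.factorial : ℝ) := by rw [hNm]
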